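/- Let X₁,...,Xₙ (n ≥ 1) be i.i.d. uniform on (0,1) and let γ be the domination number of the PICD with parameters r = 2 and c = 1/2. Then P(γ = 2) = 4/9 - (16/9)·4^{-n} and P(γ = 1) = 5/9 + (16/9)·4^{-n}. -/

import Mathlib

open Set MeasureTheory intervalIntegral
noncomputable def nu : Measure ℝ := volume.restrict (Set.Ioo (0:ℝ) 1)
instance : IsProbabilityMeasure nu := by
  constructor
  rw [nu, Measure.restrict_apply MeasurableSet.univ, Set.univ_inter, Real.volume_Ioo]
  norm_num
theorem pi_marked (m : ℕ) (k : Fin (m+1)) (T : Set ℝ) (hT : MeasurableSet T)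
    (W : Fin m → ℝ → Set ℝ)
    (hWm : ∀ j, MeasurableSet {p : ℝ × ℝ | p.2 ∈ W j p.1}) :
    (Measure.pi fun _ : Fin (m+1) => nu)
      {g | g k ∈ T ∧ ∀ j, g (k.succAbove j) ∈ W j (g k)} =
      ∫⁻ b in T, ∏ j, nu (W j b) ∂nu := by
  have hpres := measurePreserving_piFinSuccAbove (fun _ : Fin (m+1) => nu) k
  set e := MeasurableEquiv.piFinSuccAbove (fun _ : Fin (m+1) => ℝ) k with he
  have hEm : MeasurableSet {p : ℝ × (Fin m → ℝ) | p.1 ∈ T ∧ ∀ j, p.2 j ∈ W j p.1} := by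
    have : {p : ℝ × (Fin m → ℝ) | p.1 ∈ T ∧ ∀ j, p.2 j ∈ W j p.1} =
        (Prod.fst ⁻¹' T) ∩ ⋂ j, (fun p : ℝ × (Fin m → ℝ) => (p.1, p.2 j)) ⁻¹' {p : ℝ × ℝ | p.2 ∈ W j p.1} := by
      ext p; simp [Set.mem_iInter]
    rw [this]
    exact (measurable_fst hT).inter <| MeasurableSet.iInter fun j =>
      (measurable_fst.prodMk ((measurable_pi_apply j).comp measurable_snd)) (hWm j)
  have hset : {g : Fin (m+1) → ℝ | g k ∈ T ∧ ∀ j, g (k.succAbove j) ∈ W j (g k)} =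
      e ⁻¹' {p : ℝ × (Fin m → ℝ) | p.1 ∈ T ∧ ∀ j, p.2 j ∈ W j p.1} := rfl
  rw [hset, hpres.measure_preimage hEm.nullMeasurableSet, Measure.prod_apply hEm]
  rw [← lintegral_indicator hT (fun b => ∏ j, nu (W j b))]
  congr 1 with b
  by_cases hb : b ∈ T
  · have : (Prod.mk b ⁻¹' {p : ℝ × (Fin m → ℝ) | p.1 ∈ T ∧ ∀ j, p.2 j ∈ W j p.1}) =
        Set.pi Set.univ (fun j => W j b) := by
      ext g; simp [hb, Set.mem_pi]
    rw [this, Measure.pi_pi, Set.indicator_of_mem hb]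
  · have : (Prod.mk b ⁻¹' {p : ℝ × (Fin m → ℝ) | p.1 ∈ T ∧ ∀ j, p.2 j ∈ W j p.1}) = ∅ := by
      ext g; simp [hb]
    rw [this, measure_empty, Set.indicator_of_notMem hb]

theorem pi_two_marked (m : ℕ) (i k : Fin (m+2)) (hik : i ≠ k)
    (R : Set (ℝ × ℝ)) (hR : MeasurableSet R) (U : ℝ → ℝ → Set ℝ)
    (hU : MeasurableSet {p : ℝ × ℝ × ℝ | p.2.2 ∈ U p.1 p.2.1}) :
    (Measure.pi fun _ : Fin (m+2) => nu)
      {X | (X i, X k) ∈ R ∧ ∀ j, j ≠ i → j ≠ k → X j ∈ U (X i) (X k)} =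
      ∫⁻ a, ∫⁻ b in {t | (a, t) ∈ R}, (nu (U a b))^m ∂nu ∂nu := by
  obtain ⟨k', hk'⟩ := Fin.exists_succAbove_eq hik.symm
  have hpres := measurePreserving_piFinSuccAbove (fun _ : Fin (m+2) => nu) i
  set e := MeasurableEquiv.piFinSuccAbove (fun _ : Fin (m+2) => ℝ) i with he
  set E : Set (ℝ × (Fin (m+1) → ℝ)) :=
    {p | (p.1, p.2 k') ∈ R ∧ ∀ j', j' ≠ k' → p.2 j' ∈ U p.1 (p.2 k')} with hE
  have hEm : MeasurableSet E := by
    have : E = ((fun p : ℝ × (Fin (m+1) → ℝ) => (p.1, p.2 k')) ⁻¹' R) ∩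
        ⋂ j', {p : ℝ × (Fin (m+1) → ℝ) | j' ≠ k' → p.2 j' ∈ U p.1 (p.2 k')} := by
      ext p; simp [hE, Set.mem_iInter]
    rw [this]
    refine MeasurableSet.inter
      ((measurable_fst.prodMk ((measurable_pi_apply k').comp measurable_snd)) hR) ?_
    refine MeasurableSet.iInter fun j' => ?_
    by_cases hj : j' = k'
    · simp [hj]
    · have : {p : ℝ × (Fin (m+1) → ℝ) | j' ≠ k' → p.2 j' ∈ U p.1 (p.2 k')} =
          (fun p : ℝ × (Fin (m+1) → ℝ) => (p.1, p.2 k', p.2 j')) ⁻¹'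
            {p : ℝ × ℝ × ℝ | p.2.2 ∈ U p.1 p.2.1} := by
        ext p; simp [hj]
      rw [this]
      exact (measurable_fst.prodMk (((measurable_pi_apply k').comp measurable_snd).prodMk
        ((measurable_pi_apply j').comp measurable_snd))) hU
  have hset : {X : Fin (m+2) → ℝ | (X i, X k) ∈ R ∧ ∀ j, j ≠ i → j ≠ k → X j ∈ U (X i) (X k)} =
      e ⁻¹' E := by
    ext X
    simp only [Set.mem_preimage, hE, Set.mem_setOf_eq, he,
      MeasurableEquiv.piFinSuccAbove_apply, Fin.insertNthEquiv_symm_apply, Fin.removeNth]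
    have hXk : X k = X (i.succAbove k') := by rw [hk']
    constructor
    · rintro ⟨h1, h2⟩
      refine ⟨by rwa [← hXk], fun j' hj' => ?_⟩
      rw [← hXk]
      refine h2 _ (Fin.succAbove_ne i j') ?_
      rw [← hk']; exact fun h => hj' (Fin.succAbove_right_injective h)
    · rintro ⟨h1, h2⟩
      refine ⟨by rwa [← hXk] at h1, fun j hji hjk => ?_⟩
      obtain ⟨j', rfl⟩ := Fin.exists_succAbove_eq hji
      rw [hXk]
      refine h2 j' fun h => hjk ?_
      rw [h, hk']
  rw [hset, hpres.measure_preimage hEm.nullMeasurableSet, Measure.prod_apply hEm]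
  congr 1 with a
  have hslice : (Prod.mk a ⁻¹' E) =
      {g : Fin (m+1) → ℝ | g k' ∈ {t | (a, t) ∈ R} ∧
        ∀ j, g (k'.succAbove j) ∈ U a (g k')} := by
    ext g
    simp only [Set.mem_preimage, hE, Set.mem_setOf_eq]
    constructor
    · rintro ⟨h1, h2⟩
      exact ⟨h1, fun j => h2 _ (Fin.succAbove_ne k' j)⟩
    · rintro ⟨h1, h2⟩
      refine ⟨h1, fun j' hj' => ?_⟩
      obtain ⟨j, rfl⟩ := Fin.exists_succAbove_eq hj'
      exact h2 j
  have hWa : ∀ j : Fin m, MeasurableSet {p : ℝ × ℝ | p.2 ∈ U a p.1} := by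
    intro j
    have : {p : ℝ × ℝ | p.2 ∈ U a p.1} =
        (fun p : ℝ × ℝ => (a, p.1, p.2)) ⁻¹' {p : ℝ × ℝ × ℝ | p.2.2 ∈ U p.1 p.2.1} := rfl
    rw [this]
    exact (measurable_const.prodMk (measurable_fst.prodMk measurable_snd)) hU
  rw [hslice,
    pi_marked m k' {t | (a, t) ∈ R} (measurable_prodMk_left hR) (fun _ t => U a t) hWa]
  exact lintegral_congr fun b => by
    rw [Finset.prod_const, Finset.card_univ, Fintype.card_fin]

/-- The parameterized proximity region on `(0,1)`: `N(x,r,c) = (0, min(1, r·x))` for `x < c`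
and `(max(0, 1 - r(1-x)), 1)` for `x > c`. -/
noncomputable def N01 (r c x : ℝ) : Set ℝ :=
  if x < c then Set.Ioo 0 (min 1 (r * x)) else Set.Ioo (max 0 (1 - r * (1 - x))) 1

/-- The domination number of the digraph on vertices `X 0, …, X (n-1)` where `u` dominates
itself and every vertex lying in `N u`. -/
noncomputable def domNum (n : ℕ) (X : Fin n → ℝ) (N : ℝ → Set ℝ) : ℕ :=
  sInf {k | ∃ S : Finset (Fin n), S.card = k ∧
    ∀ j, ∃ i ∈ S, X j = X i ∨ X j ∈ N (X i)}

section dom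
variable {n : ℕ} (X : Fin n → ℝ) (N : ℝ → Set ℝ)

def domSet : Set ℕ := {k | ∃ S : Finset (Fin n), S.card = k ∧
    ∀ j, ∃ i ∈ S, X j = X i ∨ X j ∈ N (X i)}

lemma domSet_nonempty : (domSet X N).Nonempty := by
  refine ⟨n, Finset.univ, by simp, fun j => ⟨j, Finset.mem_univ j, Or.inl rfl⟩⟩

lemma zero_not_mem_domSet (hn : 1 ≤ n) : 0 ∉ domSet X N := by
  rintro ⟨S, hS, hcov⟩
  obtain ⟨i, hi, -⟩ := hcov ⟨0, hn⟩
  rw [Finset.card_eq_zero.mp hS] at hi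
  exact absurd hi (Finset.notMem_empty i)

lemma one_mem_domSet_iff : 1 ∈ domSet X N ↔
    ∃ i, ∀ j, X j = X i ∨ X j ∈ N (X i) := by
  constructor
  · rintro ⟨S, hS, hcov⟩
    obtain ⟨i, rfl⟩ := Finset.card_eq_one.mp hS
    refine ⟨i, fun j => ?_⟩
    obtain ⟨i', hi', h⟩ := hcov j
    rwa [Finset.mem_singleton.mp hi'] at h
  · rintro ⟨i, hi⟩
    exact ⟨{i}, rfl, fun j => ⟨i, Finset.mem_singleton_self i, hi j⟩⟩

lemma domNum_eq_one_iff (hn : 1 ≤ n) :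
    domNum n X N = 1 ↔ ∃ i, ∀ j, X j = X i ∨ X j ∈ N (X i) := by
  rw [← one_mem_domSet_iff X N]
  constructor
  · intro h
    have := Nat.sInf_mem (domSet_nonempty X N)
    rwa [show sInf (domSet X N) = domNum n X N from rfl, h] at this
  · intro h
    refine le_antisymm (Nat.sInf_le h) ?_
    rw [Nat.one_le_iff_ne_zero]
    intro h0
    have := Nat.sInf_mem (domSet_nonempty X N)
    rw [show sInf (domSet X N) = domNum n X N from rfl, h0] at this
    exact zero_not_mem_domSet X N hn this

end dom

/-- Under good coordinates, failure of single-domination gives domination number 2. -/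
lemma domNum_eq_two_iff {n : ℕ} (hn : 1 ≤ n) (X : Fin n → ℝ)
    (hX : ∀ i, X i ∈ Set.Ioo (0:ℝ) 1) :
    domNum n X (N01 2 (1/2)) = 2 ↔
      ¬ ∃ i, ∀ j, X j = X i ∨ X j ∈ N01 2 (1/2) (X i) := by
  constructor
  · intro h2 hD
    rw [← domNum_eq_one_iff X _ hn] at hD
    omega
  · intro hD
    -- no coordinate equals 1/2
    have hhalf : ∀ j, X j ≠ 1/2 := by
      intro j hj
      refine hD ⟨j, fun l => Or.inr ?_⟩
      have : ¬ (X j < 1/2) := by rw [hj]; exact lt_irrefl _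
      rw [N01, if_neg this, hj]
      have : max 0 (1 - 2 * (1 - (1:ℝ)/2)) = 0 := by norm_num
      rw [this]
      exact hX l
    -- there is a point below 1/2
    have hbelow : ∃ a, X a < 1/2 := by
      by_contra hno
      push_neg at hno
      obtain ⟨i, -, hi⟩ := Finset.exists_min_image Finset.univ X
        ⟨⟨0, hn⟩, Finset.mem_univ _⟩
      refine hD ⟨i, fun j => ?_⟩
      rcases eq_or_ne (X j) (X i) with h | h
      · exact Or.inl h
      · have hij : X i < X j := lt_of_le_of_ne (hi j (Finset.mem_univ j)) (Ne.symm h)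
        have hni : ¬ (X i < 1/2) := not_lt.mpr (hno i)
        rw [N01, if_neg hni]
        refine Or.inr ⟨max_lt (hX j).1 ?_, (hX j).2⟩
        have := (hX i).2
        nlinarith
    have habove : ∃ b, 1/2 < X b := by
      by_contra hno
      push_neg at hno
      obtain ⟨i, -, hi⟩ := Finset.exists_max_image Finset.univ X
        ⟨⟨0, hn⟩, Finset.mem_univ _⟩
      refine hD ⟨i, fun j => ?_⟩
      rcases eq_or_ne (X j) (X i) with h | h
      · exact Or.inl h
      · have hij : X j < X i := lt_of_le_of_ne (hi j (Finset.mem_univ j)) h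
        have hilt : X i < 1/2 := lt_of_le_of_ne (hno i) (hhalf i)
        rw [N01, if_pos hilt]
        refine Or.inr ⟨(hX j).1, lt_min (hX j).2 ?_⟩
        have := (hX i).1
        nlinarith
    -- the two-element dominating set
    obtain ⟨a, ha⟩ := hbelow
    obtain ⟨b, hb⟩ := habove
    have hFne : (Finset.univ.filter (fun j => X j < 1/2)).Nonempty :=
      ⟨a, Finset.mem_filter.mpr ⟨Finset.mem_univ a, ha⟩⟩
    have hGne : (Finset.univ.filter (fun j => 1/2 < X j)).Nonempty :=
      ⟨b, Finset.mem_filter.mpr ⟨Finset.mem_univ b, hb⟩⟩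
    obtain ⟨il, hilmem, hil⟩ := Finset.exists_max_image _ X hFne
    obtain ⟨ir, hirmem, hir⟩ := Finset.exists_min_image _ X hGne
    have hilhalf : X il < 1/2 := (Finset.mem_filter.mp hilmem).2
    have hirhalf : 1/2 < X ir := (Finset.mem_filter.mp hirmem).2
    have hne : il ≠ ir := fun h => by rw [h] at hilhalf; linarith
    have h2mem : 2 ∈ domSet X (N01 2 (1/2)) := by
      refine ⟨{il, ir}, Finset.card_pair hne, fun j => ?_⟩
      rcases lt_trichotomy (X j) (1/2) with hj | hj | hj
      · refine ⟨il, Finset.mem_insert_self _ _, ?_⟩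
        rcases eq_or_ne (X j) (X il) with h | h
        · exact Or.inl h
        · have : X j < X il := lt_of_le_of_ne
            (hil j (Finset.mem_filter.mpr ⟨Finset.mem_univ j, hj⟩)) h
          rw [N01, if_pos hilhalf]
          refine Or.inr ⟨(hX j).1, lt_min (hX j).2 ?_⟩
          have := (hX il).1
          nlinarith
      · exact absurd hj (hhalf j)
      · refine ⟨ir, Finset.mem_insert_of_mem (Finset.mem_singleton_self _), ?_⟩
        rcases eq_or_ne (X j) (X ir) with h | h
        · exact Or.inl h
        · have hlt : X ir < X j := lt_of_le_of_ne
            (hir j (Finset.mem_filter.mpr ⟨Finset.mem_univ j, hj⟩)) (Ne.symm h)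
          have : ¬ (X ir < 1/2) := not_lt.mpr (le_of_lt hirhalf)
          rw [N01, if_neg this]
          refine Or.inr ⟨max_lt (hX j).1 ?_, (hX j).2⟩
          have := (hX ir).2
          nlinarith
    have h1n : 1 ∉ domSet X (N01 2 (1/2)) := fun h =>
      hD ((one_mem_domSet_iff X _).mp h)
    have h0n := zero_not_mem_domSet X (N01 2 (1/2)) hn
    refine le_antisymm (Nat.sInf_le h2mem) ?_
    have hmem := Nat.sInf_mem (domSet_nonempty X (N01 2 (1/2)))
    have hne0 : sInf (domSet X (N01 2 (1/2))) ≠ 0 := fun h => h0n (by rwa [h] at hmem)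
    have hne1 : sInf (domSet X (N01 2 (1/2))) ≠ 1 := fun h => h1n (by rwa [h] at hmem)
    show 2 ≤ sInf (domSet X (N01 2 (1/2)))
    omega

/-- The joint law of `n` i.i.d. uniform random variables on `(0,1)`. -/
noncomputable def unifPi (n : ℕ) : Measure (Fin n → ℝ) :=
  Measure.pi fun _ => volume.restrict (Set.Ioo (0:ℝ) 1)




lemma integral_pow_affine (a b A B : ℝ) (hB : B ≠ 0) (m : ℕ) :
    ∫ x in a..b, (A + B*x)^m =
      ((A + B*b)^(m+1) - (A + B*a)^(m+1)) / (B*(m+1)) := by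
  have key : ∀ x : ℝ, HasDerivAt (fun y : ℝ => (A + B*y)^(m+1) / (B*(m+1)))
      ((A + B*x)^m) x := by
    intro x
    have h1 : HasDerivAt (fun y : ℝ => A + B*y) B x := by
      simpa using ((hasDerivAt_id x).const_mul B).const_add A
    have h2 := (h1.pow (m+1)).div_const (B*(m+1))
    refine h2.congr_deriv ?_
    have hm : ((m:ℝ)+1) ≠ 0 := by positivity
    rw [div_eq_iff (mul_ne_zero hB hm)]
    push_cast
    ring
  rw [integral_eq_sub_of_hasDerivAt (fun x _ => key x)
    ((by fun_prop : Continuous fun x : ℝ => (A + B*x)^m).intervalIntegrable a b)]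
  ring

lemma inner_eval (t c : ℝ) (hc0 : 0 < c) (hct : 0 ≤ 3*(t-c) - 1) (hc1 : c < 1) (m : ℕ) :
    ∫⁻ s in Set.Ioc 0 c, (ENNReal.ofReal ((3*(t-s)-1)/2))^m ∂nu
      = ENNReal.ofReal ((((3*t-1)/2)^(m+1) - ((3*(t-c)-1)/2)^(m+1)) / ((3/2)*(m+1))) := by
  have hsub : Set.Ioc 0 c ∩ Set.Ioo (0:ℝ) 1 = Set.Ioc 0 c := by
    refine Set.inter_eq_left.mpr fun s hs => ⟨hs.1, lt_of_le_of_lt hs.2 hc1⟩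
  rw [nu, Measure.restrict_restrict measurableSet_Ioc, hsub]
  have hnn : ∀ s ∈ Set.Ioc (0:ℝ) c, 0 ≤ (3*(t-s)-1)/2 := by
    intro s hs
    have := hs.2
    linarith
  rw [setLIntegral_congr_fun_ae measurableSet_Ioc
    (ae_of_all _ fun s hs => (ENNReal.ofReal_pow (hnn s hs) m).symm)]
  rw [← ofReal_integral_eq_lintegral_ofReal]
  · rw [← intervalIntegral.integral_of_le hc0.le]
    congr 1
    have : ∀ s : ℝ, (3*(t-s)-1)/2 = (3*t-1)/2 + (-(3/2))*s := fun s => by ring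
    rw [intervalIntegral.integral_congr (g := fun s => ((3*t-1)/2 + (-(3/2))*s)^m)
      (fun s _ => by rw [this])]
    rw [integral_pow_affine _ _ _ _ (by norm_num) m]
    have e1 : (3*t-1)/2 + (-(3/2))*c = (3*(t-c)-1)/2 := by ring
    have e2 : (3*t-1)/2 + (-(3/2))*(0:ℝ) = (3*t-1)/2 := by ring
    rw [e1, e2]
    have hm : ((m:ℝ)+1) ≠ 0 := by positivity
    field_simp
    ring
  · exact Continuous.integrableOn_Ioc (by fun_prop)
  · exact (ae_restrict_iff' measurableSet_Ioc).mpr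
      (ae_of_all _ fun s hs => pow_nonneg (hnn s hs) m)

def Rset : Set (ℝ × ℝ) := {p | 0 < p.2 ∧ 2*p.2 ≤ p.1 ∧ p.2 ≤ 2*p.1 - 1 ∧ p.1 < 1}

noncomputable def Uset (s t : ℝ) : Set ℝ := Set.Ioo s t \ Set.Ioo (t/2) ((1+s)/2)

lemma measurableSet_Rset : MeasurableSet Rset := by
  refine MeasurableSet.inter (measurableSet_lt measurable_const measurable_snd) <|
    MeasurableSet.inter (measurableSet_le (measurable_snd.const_mul 2) measurable_fst) <|
    MeasurableSet.inter (measurableSet_le measurable_snd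
      ((measurable_fst.const_mul 2).sub measurable_const)) <|
    measurableSet_lt measurable_fst measurable_const

lemma nu_Uset {s t : ℝ} (hs : 0 < s) (h1 : 2*s ≤ t) (h2 : s ≤ 2*t-1) (ht : t < 1) :
    nu (Uset s t) = ENNReal.ofReal ((3*(t-s)-1)/2) := by
  have hsub : Uset s t ∩ Set.Ioo (0:ℝ) 1 = Uset s t :=
    Set.inter_eq_left.mpr fun x hx =>
      ⟨lt_trans hs hx.1.1, lt_trans hx.1.2 ht⟩
  rw [Uset] at hsub ⊢
  rw [nu, Measure.restrict_apply (measurableSet_Ioo.diff measurableSet_Ioo), hsub]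
  rw [measure_diff (Set.Ioo_subset_Ioo (by linarith) (by linarith))
    measurableSet_Ioo.nullMeasurableSet (by rw [Real.volume_Ioo]; exact ENNReal.ofReal_ne_top)]
  rw [Real.volume_Ioo, Real.volume_Ioo, ← ENNReal.ofReal_sub _ (by linarith)]
  congr 1
  ring

lemma section_Rset {t : ℝ} (ht : t < 1) :
    {s | (t, s) ∈ Rset} = Set.Ioc 0 (min (t/2) (2*t-1)) := by
  ext s
  simp only [Rset, Set.mem_setOf_eq, Set.mem_Ioc, le_min_iff]
  constructor
  · rintro ⟨h1, h2, h3, -⟩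
    exact ⟨h1, by linarith, h3⟩
  · rintro ⟨h1, h2, h3⟩
    exact ⟨h1, by linarith, h3, ht⟩

lemma outer_eval (m : ℕ) :
    (∫⁻ t, ∫⁻ s in {s | (t, s) ∈ Rset}, (nu (Uset s t))^m ∂nu ∂nu)
      = ENNReal.ofReal ((4 / (9*(m+1)*(m+2))) * (1 - 4*(1/4)^(m+2))) := by
  have hdecomp : Set.Ioo (0:ℝ) 1 =
      Set.Ioc 0 (1/2) ∪ (Set.Ioc (1/2) (2/3) ∪ Set.Ioo (2/3) 1) := by
    ext x
    simp only [Set.mem_Ioo, Set.mem_union, Set.mem_Ioc]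
    constructor
    · rintro ⟨h0, h1⟩
      rcases le_or_gt x (1/2) with h | h
      · exact Or.inl ⟨h0, h⟩
      rcases le_or_gt x (2/3) with h' | h'
      · exact Or.inr (Or.inl ⟨h, h'⟩)
      · exact Or.inr (Or.inr ⟨h', h1⟩)
    · rintro (⟨h0, h1⟩ | ⟨h0, h1⟩ | ⟨h0, h1⟩) <;> constructor <;> linarith
  have hmeas2 : MeasurableSet (Set.Ioc ((1:ℝ)/2) (2/3) ∪ Set.Ioo (2/3) 1) :=
    measurableSet_Ioc.union measurableSet_Ioo
  show ∫⁻ t in Set.Ioo (0:ℝ) 1, _ ∂volume = _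
  rw [hdecomp, lintegral_union hmeas2 (Set.disjoint_left.mpr (by
      rintro x ⟨-, hx2⟩ (⟨hx3, -⟩ | ⟨hx3, -⟩) <;> linarith)),
    lintegral_union measurableSet_Ioo (Set.disjoint_left.mpr (by
      rintro x ⟨-, hx2⟩ ⟨hx3, -⟩; linarith))]
  -- piece 1 is zero
  have p1 : (∫⁻ t in Set.Ioc (0:ℝ) (1/2),
      ∫⁻ s in {s | (t, s) ∈ Rset}, (nu (Uset s t))^m ∂nu ∂volume) = 0 := by
    rw [setLIntegral_congr_fun_ae measurableSet_Ioc (ae_of_all _ fun t ht => ?_), lintegral_zero]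
    have hempty : {s | (t, s) ∈ Rset} = (∅ : Set ℝ) := by
      ext s
      simp only [Rset, Set.mem_setOf_eq, Set.mem_empty_iff_false, iff_false, not_and]
      intro h1 h2 h3
      rcases ht with ⟨-, ht2⟩
      linarith
    rw [hempty, Measure.restrict_empty, lintegral_zero_measure]
  -- piece 2
  have p2 : (∫⁻ t in Set.Ioc ((1:ℝ)/2) (2/3),
      ∫⁻ s in {s | (t, s) ∈ Rset}, (nu (Uset s t))^m ∂nu ∂volume) =
      ENNReal.ofReal (∫ t in ((1:ℝ)/2)..(2/3),
        (((3*t-1)/2)^(m+1) - ((2-3*t)/2)^(m+1)) / ((3/2)*(m+1))) := by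
    have hpt : ∀ t ∈ Set.Ioc ((1:ℝ)/2) (2/3),
        (∫⁻ s in {s | (t, s) ∈ Rset}, (nu (Uset s t))^m ∂nu) =
        ENNReal.ofReal ((((3*t-1)/2)^(m+1) - ((2-3*t)/2)^(m+1)) / ((3/2)*(m+1))) := by
      intro t ht
      have ht1 : t ≤ 2/3 := ht.2
      have ht2 : 1/2 < t := ht.1
      rw [section_Rset (by linarith), min_eq_right (by linarith)]
      rw [setLIntegral_congr_fun_ae measurableSet_Ioc (ae_of_all _ fun s hs => by
        rw [nu_Uset hs.1 (by rcases hs with ⟨-, h⟩; linarith) hs.2 (by linarith)])]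
      rw [inner_eval t (2*t-1) (by linarith) (by linarith) (by linarith) m]
      congr 2
      ring
    rw [setLIntegral_congr_fun_ae measurableSet_Ioc (ae_of_all _ hpt)]
    rw [← ofReal_integral_eq_lintegral_ofReal (Continuous.integrableOn_Ioc (by fun_prop))
        ((ae_restrict_iff' measurableSet_Ioc).mpr (ae_of_all _ fun t ht => ?_)),
        ← intervalIntegral.integral_of_le (by norm_num)]
    have h1 : (0:ℝ) ≤ (2-3*t)/2 := by rcases ht with ⟨-, h⟩; linarith
    have h2 : (2-3*t)/2 ≤ (3*t-1)/2 := by rcases ht with ⟨h, -⟩; linarith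
    have := pow_le_pow_left₀ h1 h2 (m+1)
    have hd : (0:ℝ) < (3/2)*((m:ℝ)+1) := by positivity
    exact div_nonneg (by linarith) hd.le
  -- piece 3
  have p3 : (∫⁻ t in Set.Ioo ((2:ℝ)/3) 1,
      ∫⁻ s in {s | (t, s) ∈ Rset}, (nu (Uset s t))^m ∂nu ∂volume) =
      ENNReal.ofReal (∫ t in ((2:ℝ)/3)..1,
        (((3*t-1)/2)^(m+1) - ((3*t-2)/4)^(m+1)) / ((3/2)*(m+1))) := by
    have hpt : ∀ t ∈ Set.Ioo ((2:ℝ)/3) 1,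
        (∫⁻ s in {s | (t, s) ∈ Rset}, (nu (Uset s t))^m ∂nu) =
        ENNReal.ofReal ((((3*t-1)/2)^(m+1) - ((3*t-2)/4)^(m+1)) / ((3/2)*(m+1))) := by
      intro t ht
      have ht1 : 2/3 < t := ht.1
      have ht2 : t < 1 := ht.2
      rw [section_Rset ht2, min_eq_left (by linarith)]
      rw [setLIntegral_congr_fun_ae measurableSet_Ioc (ae_of_all _ fun s hs => by
        rw [nu_Uset hs.1 (by rcases hs with ⟨-, h⟩; linarith) (by rcases hs with ⟨-, h⟩; linarith) ht2])]
      rw [inner_eval t (t/2) (by linarith) (by linarith) (by linarith) m]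
      congr 2
      ring
    rw [setLIntegral_congr_fun_ae measurableSet_Ioo (ae_of_all _ hpt)]
    rw [← ofReal_integral_eq_lintegral_ofReal ((Continuous.integrableOn_Ioc (by fun_prop)).mono_set Set.Ioo_subset_Ioc_self)
        ((ae_restrict_iff' measurableSet_Ioo).mpr (ae_of_all _ fun t ht => ?_)),
        ← MeasureTheory.integral_Ioc_eq_integral_Ioo,
        ← intervalIntegral.integral_of_le (by norm_num)]
    have h1 : (0:ℝ) ≤ (3*t-2)/4 := by rcases ht with ⟨h, -⟩; linarith
    have h2 : (3*t-2)/4 ≤ (3*t-1)/2 := by rcases ht with ⟨h, -⟩; linarith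
    have := pow_le_pow_left₀ h1 h2 (m+1)
    have hd : (0:ℝ) < (3/2)*((m:ℝ)+1) := by positivity
    exact div_nonneg (by linarith) hd.le
  rw [p1, p2, p3, zero_add]
  -- evaluate the two interval integrals
  have hm1 : ((m:ℝ)+1) ≠ 0 := by positivity
  have hm2 : ((m:ℝ)+2) ≠ 0 := by positivity
  have hint2 : (∫ t in ((1:ℝ)/2)..(2/3),
      (((3*t-1)/2)^(m+1) - ((2-3*t)/2)^(m+1)) / ((3/2)*(m+1))) =
      ((((1:ℝ)/2)^(m+2) - (1/4)^(m+2)) / ((3/2)*(m+2))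
        - ((0:ℝ)^(m+2) - (1/4)^(m+2)) / ((-(3/2))*(m+2))) / ((3/2)*(m+1)) := by
    rw [intervalIntegral.integral_div]
    congr 1
    rw [intervalIntegral.integral_congr (g := fun t : ℝ =>
      ((-1/2) + (3/2)*t)^(m+1) - (1 + (-(3/2))*t)^(m+1)) (fun t _ => by ring_nf)]
    rw [intervalIntegral.integral_sub
      (Continuous.intervalIntegrable (by fun_prop) _ _)
      (Continuous.intervalIntegrable (by fun_prop) _ _)]
    rw [integral_pow_affine _ _ _ _ (by norm_num) (m+1),
      integral_pow_affine _ _ _ _ (by norm_num) (m+1)]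
    norm_num
    push_cast
    ring_nf
  have hint3 : (∫ t in ((2:ℝ)/3)..1,
      (((3*t-1)/2)^(m+1) - ((3*t-2)/4)^(m+1)) / ((3/2)*(m+1))) =
      (((1:ℝ)^(m+2) - (1/2)^(m+2)) / ((3/2)*(m+2))
        - (((1:ℝ)/4)^(m+2) - (0:ℝ)^(m+2)) / ((3/4)*(m+2))) / ((3/2)*(m+1)) := by
    rw [intervalIntegral.integral_div]
    congr 1
    rw [intervalIntegral.integral_congr (g := fun t : ℝ =>
      ((-1/2) + (3/2)*t)^(m+1) - ((-1/2) + (3/4)*t)^(m+1)) (fun t _ => by ring_nf)]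
    rw [intervalIntegral.integral_sub
      (Continuous.intervalIntegrable (by fun_prop) _ _)
      (Continuous.intervalIntegrable (by fun_prop) _ _)]
    rw [integral_pow_affine _ _ _ _ (by norm_num) (m+1),
      integral_pow_affine _ _ _ _ (by norm_num) (m+1)]
    norm_num
    push_cast
    ring_nf
  rw [hint2, hint3]
  -- nonnegativity facts
  have hP2 : ((1:ℝ)/2)^(m+2) ≤ (1/2)^2 :=
    pow_le_pow_of_le_one (by norm_num) (by norm_num) (by omega)
  have hP4 : ((1:ℝ)/4)^(m+2) ≤ (1/4)^2 :=
    pow_le_pow_of_le_one (by norm_num) (by norm_num) (by omega)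
  have hP42 : ((1:ℝ)/4)^(m+2) ≤ (1/2) * ((1/2)^(m+2)) := by
    have h1 : ((1:ℝ)/4)^(m+1) ≤ (1/2)^(m+1) := pow_le_pow_left₀ (by norm_num) (by norm_num) _
    calc ((1:ℝ)/4)^(m+2) = (1/4)^(m+1) * (1/4) := by rw [pow_succ]
    _ ≤ (1/2)^(m+1) * (1/4) := by nlinarith
    _ = (1/2) * ((1/2)^(m+2)) := by rw [pow_succ]; ring
  have hP2nn : (0:ℝ) ≤ (1/2:ℝ)^(m+2) := by positivity
  have hP4nn : (0:ℝ) ≤ (1/4:ℝ)^(m+2) := by positivity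
  have hz : ((0:ℝ))^(m+2) = 0 := zero_pow (by omega)
  have hmnn : (0:ℝ) ≤ (m:ℝ) := Nat.cast_nonneg m
  have hd1 : (0:ℝ) < (3/2)*((m:ℝ)+1) := by positivity
  have hd2 : (0:ℝ) < (3/2)*((m:ℝ)+2) := by positivity
  have hv2 : (0:ℝ) ≤ ((((1:ℝ)/2)^(m+2) - (1/4)^(m+2)) / ((3/2)*(m+2))
        - ((0:ℝ)^(m+2) - (1/4)^(m+2)) / ((-(3/2))*(m+2))) / ((3/2)*(m+1)) := by
    rw [hz]
    have e : ((0:ℝ) - (1/4)^(m+2)) / ((-(3/2))*((m:ℝ)+2)) =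
        (1/4)^(m+2) / ((3/2)*((m:ℝ)+2)) := by
      have hneg : (-(3/2))*((m:ℝ)+2) < 0 := by nlinarith
      rw [div_eq_div_iff hneg.ne hd2.ne']
      ring
    rw [e]
    apply div_nonneg _ hd1.le
    rw [div_sub_div_same]
    apply div_nonneg _ hd2.le
    linarith [hP42]
  have hv3 : (0:ℝ) ≤ (((1:ℝ)^(m+2) - (1/2)^(m+2)) / ((3/2)*(m+2))
        - (((1:ℝ)/4)^(m+2) - (0:ℝ)^(m+2)) / ((3/4)*(m+2))) / ((3/2)*(m+1)) := by
    rw [hz, one_pow]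
    have hd3 : (0:ℝ) < (3/4)*((m:ℝ)+2) := by positivity
    apply div_nonneg _ hd1.le
    rw [sub_nonneg, div_le_div_iff₀ hd3 hd2]
    nlinarith [hP4, hP2, hmnn]
  rw [← ENNReal.ofReal_add hv2 hv3]
  congr 1
  rw [hz, one_pow]
  field_simp
  ring





noncomputable def Eset (m : ℕ) (i k : Fin (m+2)) : Set (Fin (m+2) → ℝ) :=
  {X | (X k, X i) ∈ Rset ∧ ∀ j, j ≠ k → j ≠ i → X j ∈ Uset (X i) (X k)}

-- basic consequences of the Rset constraints
lemma Rset_facts {s t : ℝ} (h : ((t, s) : ℝ × ℝ) ∈ Rset) :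
    0 < s ∧ s < 1/2 ∧ 1/2 < t ∧ t < 1 ∧ s < t := by
  obtain ⟨h1, h2, h3, h4⟩ := h
  refine ⟨h1, by linarith, by linarith, h4, by linarith⟩

lemma Eset_good {m : ℕ} {i k : Fin (m+2)} {X : Fin (m+2) → ℝ} (h : X ∈ Eset m i k) :
    ∀ j, X j ∈ Set.Ioo (0:ℝ) 1 := by
  obtain ⟨hR, hmid⟩ := h
  obtain ⟨h1, h2, h3, h4, h5⟩ := Rset_facts hR
  intro j
  by_cases hjk : j = k
  · subst hjk; exact ⟨by linarith, h4⟩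
  by_cases hji : j = i
  · subst hji; exact ⟨h1, by linarith⟩
  · obtain ⟨⟨ha, hb⟩, -⟩ := hmid j hjk hji
    exact ⟨by linarith, by linarith⟩

lemma Eset_strict {m : ℕ} {i k : Fin (m+2)} {X : Fin (m+2) → ℝ} (hik : i ≠ k)
    (h : X ∈ Eset m i k) :
    (∀ j, j ≠ i → X i < X j) ∧ (∀ j, j ≠ k → X j < X k) := by
  obtain ⟨hR, hmid⟩ := h
  obtain ⟨h1, h2, h3, h4, h5⟩ := Rset_facts hR
  constructor
  · intro j hji
    by_cases hjk : j = k
    · subst hjk; exact h5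
    · exact (hmid j hjk hji).1.1
  · intro j hjk
    by_cases hji : j = i
    · subst hji; exact h5
    · exact (hmid j hjk hji).1.2

lemma Eset_disjoint {m : ℕ} {p q : Fin (m+2) × Fin (m+2)} (hp : p.1 ≠ p.2) (hq : q.1 ≠ q.2)
    (hpq : p ≠ q) : Disjoint (Eset m p.1 p.2) (Eset m q.1 q.2) := by
  rw [Set.disjoint_left]
  intro X hXp hXq
  obtain ⟨hpmin, hpmax⟩ := Eset_strict hp hXp
  obtain ⟨hqmin, hqmax⟩ := Eset_strict hq hXq
  by_cases h1 : p.1 = q.1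
  · have h2 : p.2 ≠ q.2 := fun h2 => hpq (Prod.ext h1 h2)
    have ha := hpmax q.2 (fun h => h2 h.symm)
    have hb := hqmax p.2 h2
    linarith
  · have ha := hpmin q.1 (fun h => h1 h.symm)
    have hb := hqmin p.1 h1
    linarith

lemma Eset_dom_facts {m : ℕ} {i k : Fin (m+2)} {X : Fin (m+2) → ℝ}
    (h : X ∈ Eset m i k) :
    ∀ j, 2 * X j ≤ X k ∨ 1 + X i ≤ 2 * X j := by
  obtain ⟨hR, hmid⟩ := h
  obtain ⟨hr1, hr2, hr3, hr4⟩ := hR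
  intro j
  by_cases hjk : j = k
  · subst hjk; right; linarith
  by_cases hji : j = i
  · subst hji; left; linarith
  · obtain ⟨-, hnot⟩ := hmid j hjk hji
    simp only [Set.mem_Ioo, not_and, not_lt] at hnot
    rcases lt_or_ge (X k / 2) (X j) with hc | hc
    · right; have := hnot hc; linarith
    · left; linarith


-- ### Remaining glue

lemma measurableSet_Uset3 :
    MeasurableSet {p : ℝ × ℝ × ℝ | p.2.2 ∈ Uset p.2.1 p.1} := by
  have : {p : ℝ × ℝ × ℝ | p.2.2 ∈ Uset p.2.1 p.1} =
      ({p : ℝ × ℝ × ℝ | p.2.1 < p.2.2} ∩ {p | p.2.2 < p.1}) \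
      ({p : ℝ × ℝ × ℝ | p.1/2 < p.2.2} ∩ {p | p.2.2 < (1 + p.2.1)/2}) := by
    ext p
    simp [Uset, Set.mem_diff, Set.mem_Ioo, and_assoc]
  rw [this]
  have m1 : Measurable fun p : ℝ × ℝ × ℝ => p.1 := measurable_fst
  have m21 : Measurable fun p : ℝ × ℝ × ℝ => p.2.1 := measurable_fst.comp measurable_snd
  have m22 : Measurable fun p : ℝ × ℝ × ℝ => p.2.2 := measurable_snd.comp measurable_snd
  exact ((measurableSet_lt m21 m22).inter (measurableSet_lt m22 m1)).diff
    ((measurableSet_lt (m1.div_const 2) m22).inter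
      (measurableSet_lt m22 ((m21.const_add 1).div_const 2)))

lemma measurableSet_Eset (m : ℕ) (i k : Fin (m+2)) : MeasurableSet (Eset m i k) := by
  have : Eset m i k =
      ((fun X : Fin (m+2) → ℝ => (X k, X i)) ⁻¹' Rset) ∩
      ⋂ j, {X : Fin (m+2) → ℝ | j ≠ k → j ≠ i → X j ∈ Uset (X i) (X k)} := by
    ext X
    simp [Eset, Set.mem_iInter]
  rw [this]
  refine MeasurableSet.inter
    (((measurable_pi_apply k).prodMk (measurable_pi_apply i)) measurableSet_Rset) ?_
  refine MeasurableSet.iInter fun j => ?_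
  by_cases hjk : j = k
  · simp [hjk]
  by_cases hji : j = i
  · simp [hji]
  · have : {X : Fin (m+2) → ℝ | j ≠ k → j ≠ i → X j ∈ Uset (X i) (X k)} =
        (fun X : Fin (m+2) → ℝ => (X k, X i, X j)) ⁻¹'
          {p : ℝ × ℝ × ℝ | p.2.2 ∈ Uset p.2.1 p.1} := by
      ext X
      simp [hjk, hji]
    rw [this]
    exact ((measurable_pi_apply k).prodMk
      ((measurable_pi_apply i).prodMk (measurable_pi_apply j))) measurableSet_Uset3

lemma measure_Eset (m : ℕ) (i k : Fin (m+2)) (hik : i ≠ k) :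
    (Measure.pi fun _ : Fin (m+2) => nu) (Eset m i k) =
      ENNReal.ofReal ((4 / (9*(m+1)*(m+2))) * (1 - 4*(1/4)^(m+2))) := by
  have := pi_two_marked m k i (Ne.symm hik) Rset measurableSet_Rset
    (fun t s => Uset s t) measurableSet_Uset3
  rw [show Eset m i k = {X : Fin (m+2) → ℝ | (X k, X i) ∈ Rset ∧
      ∀ j, j ≠ k → j ≠ i → X j ∈ (fun t s => Uset s t) (X k) (X i)} from rfl, this]
  exact outer_eval m

lemma null_bad_coords (n : ℕ) :
    (Measure.pi fun _ : Fin n => nu) {X | ¬ ∀ i, X i ∈ Set.Ioo (0:ℝ) 1} = 0 := by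
  have hrw : {X : Fin n → ℝ | ¬ ∀ i, X i ∈ Set.Ioo (0:ℝ) 1} =
      ⋃ i, {X : Fin n → ℝ | X i ∈ (Set.Ioo (0:ℝ) 1)ᶜ} := by
    ext X
    simp [not_forall]
  rw [hrw]
  refine measure_iUnion_null fun i => ?_
  have h2 : {X : Fin n → ℝ | X i ∈ (Set.Ioo (0:ℝ) 1)ᶜ} =
      Set.pi Set.univ (fun j => if j = i then (Set.Ioo (0:ℝ) 1)ᶜ else Set.univ) := by
    ext X
    simp only [Set.mem_pi, Set.mem_univ, forall_true_left, Set.mem_setOf_eq]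
    constructor
    · intro h j
      by_cases hj : j = i
      · subst hj; simpa using h
      · simp [hj]
    · intro h
      have := h i
      simpa using this
  rw [h2, Measure.pi_pi]
  refine Finset.prod_eq_zero (Finset.mem_univ i) ?_
  have hkey : (volume.restrict (Set.Ioo (0:ℝ) 1)) (Set.Ioo (0:ℝ) 1)ᶜ = 0 := by
    rw [Measure.restrict_apply measurableSet_Ioo.compl, Set.compl_inter_self, measure_empty]
  simpa [nu] using hkey

lemma null_ties (m : ℕ) :
    (Measure.pi fun _ : Fin (m+2) => nu)
      {X | ∃ p : Fin (m+2) × Fin (m+2), p.1 ≠ p.2 ∧ X p.1 = X p.2} = 0 := by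
  have hrw : {X : Fin (m+2) → ℝ | ∃ p : Fin (m+2) × Fin (m+2), p.1 ≠ p.2 ∧ X p.1 = X p.2} =
      ⋃ p : Fin (m+2) × Fin (m+2), {X | p.1 ≠ p.2 ∧ X p.1 = X p.2} := by
    ext X
    simp
  rw [hrw]
  refine measure_iUnion_null fun p => ?_
  by_cases hp : p.1 = p.2
  · have : {X : Fin (m+2) → ℝ | p.1 ≠ p.2 ∧ X p.1 = X p.2} = ∅ := by
      ext X
      simp [hp]
    simp [this]
  · have hset : {X : Fin (m+2) → ℝ | p.1 ≠ p.2 ∧ X p.1 = X p.2} =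
        {X : Fin (m+2) → ℝ | (X p.1, X p.2) ∈ {q : ℝ × ℝ | q.1 = q.2} ∧
          ∀ j, j ≠ p.1 → j ≠ p.2 → X j ∈ (fun _ _ => (Set.univ : Set ℝ)) (X p.1) (X p.2)} := by
      ext X
      simp [hp]
    rw [hset, pi_two_marked m p.1 p.2 hp {q : ℝ × ℝ | q.1 = q.2}
      (measurableSet_eq_fun measurable_fst measurable_snd)
      (fun _ _ => Set.univ)
      (by simp only [Set.mem_univ, Set.setOf_true]; exact MeasurableSet.univ)]
    have hz : ∀ a : ℝ, (∫⁻ b in {t | (a, t) ∈ {q : ℝ × ℝ | q.1 = q.2}},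
        (nu (Set.univ : Set ℝ))^m ∂nu) = 0 := by
      intro a
      apply setLIntegral_measure_zero
      have : {t : ℝ | (a, t) ∈ {q : ℝ × ℝ | q.1 = q.2}} = {a} := by
        ext t
        simp [eq_comm]
      rw [this, nu, Measure.restrict_apply (measurableSet_singleton a)]
      exact measure_mono_null Set.inter_subset_left Real.volume_singleton
    simp only [hz, lintegral_zero]

lemma Eset_subset_dom2 {m : ℕ} {i k : Fin (m+2)} (X : Fin (m+2) → ℝ)
    (hX : X ∈ Eset m i k) : domNum (m+2) X (N01 2 (1/2)) = 2 := by
  have hgood := Eset_good hX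
  have hkey := Eset_dom_facts hX
  obtain ⟨hR, -⟩ := hX
  obtain ⟨h1, h2, h3, h4, h5⟩ := Rset_facts hR
  rw [domNum_eq_two_iff (by omega) X hgood]
  rintro ⟨j, hj⟩
  rcases hkey j with hc | hc
  · -- X j ≤ X k / 2 < 1/2 ; the max point X k is not dominated
    have hjlt : X j < 1/2 := by linarith
    rcases hj k with h | h
    · linarith
    · rw [N01, if_pos hjlt] at h
      obtain ⟨-, hlt⟩ := h
      have := lt_min_iff.mp hlt
      linarith [this.2]
  · -- X j ≥ (1 + X i)/2 > 1/2 ; the min point X i is not dominated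
    have hjgt : 1/2 < X j := by linarith
    rcases hj i with h | h
    · linarith
    · rw [N01, if_neg (not_lt.mpr hjgt.le)] at h
      obtain ⟨hgt, -⟩ := h
      have := max_lt_iff.mp hgt
      have h6 := this.2
      linarith

lemma dom2_subset_union {m : ℕ} (X : Fin (m+2) → ℝ)
    (hgood : ∀ j, X j ∈ Set.Ioo (0:ℝ) 1)
    (hties : ¬ ∃ p : Fin (m+2) × Fin (m+2), p.1 ≠ p.2 ∧ X p.1 = X p.2)
    (h2 : domNum (m+2) X (N01 2 (1/2)) = 2) :
    ∃ p : Fin (m+2) × Fin (m+2), p.1 ≠ p.2 ∧ X ∈ Eset m p.1 p.2 := by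
  push_neg at hties
  have hD := (domNum_eq_two_iff (by omega) X hgood).mp h2
  push_neg at hD
  obtain ⟨i, -, hi⟩ := Finset.exists_min_image Finset.univ X ⟨0, Finset.mem_univ 0⟩
  obtain ⟨k, -, hk⟩ := Finset.exists_max_image Finset.univ X ⟨0, Finset.mem_univ 0⟩
  have hi' : ∀ j, X i ≤ X j := fun j => hi j (Finset.mem_univ j)
  have hk' : ∀ j, X j ≤ X k := fun j => hk j (Finset.mem_univ j)
  have hkey : ∀ j, 2 * X j ≤ X k ∨ 1 + X i ≤ 2 * X j := by
    intro j
    obtain ⟨l, hlne, hlnot⟩ := hD j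
    have hl0 := (hgood l).1
    have hl1 := (hgood l).2
    rcases lt_trichotomy (X j) (1/2) with hj | hj | hj
    · rw [N01, if_pos hj] at hlnot
      simp only [Set.mem_Ioo, not_and, not_lt] at hlnot
      have := hlnot hl0
      rcases min_le_iff.mp this with h | h
      · linarith
      · left; linarith [hk' l]
    · exfalso
      rw [N01, if_neg (by rw [hj]; exact lt_irrefl _)] at hlnot
      refine hlnot ⟨max_lt hl0 ?_, hl1⟩
      rw [hj]
      norm_num
      exact hl0
    · rw [N01, if_neg (not_lt.mpr hj.le)] at hlnot
      simp only [Set.mem_Ioo, not_and, not_lt] at hlnot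
      have hle : X l ≤ max 0 (1 - 2*(1 - X j)) := by
        by_contra hc
        push_neg at hc
        exact absurd (hlnot hc) (not_le.mpr hl1)
      rcases le_max_iff.mp hle with h | h
      · linarith
      · right; linarith [hi' l]
  have hik : i ≠ k := by
    intro h
    obtain ⟨j0, hj0⟩ := exists_ne i
    have heq : X j0 = X i := le_antisymm (h ▸ hk' j0) (hi' j0)
    exact hties (j0, i) hj0 heq
  refine ⟨(i, k), hik, ⟨⟨(hgood i).1, ?_, ?_, (hgood k).2⟩, ?_⟩⟩
  · rcases hkey i with h | h
    · exact h
    · have := (hgood i).2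
      linarith
  · rcases hkey k with h | h
    · have := (hgood k).1
      linarith
    · linarith
  · intro j hjk hji
    refine ⟨⟨lt_of_le_of_ne (hi' j) (hties (i, j) (Ne.symm hji)),
      lt_of_le_of_ne (hk' j) (hties (j, k) hjk)⟩, ?_⟩
    simp only [Set.mem_Ioo, not_and, not_lt]
    intro hc
    rcases hkey j with h | h
    · linarith
    · linarith

lemma measure_W (m : ℕ) :
    (Measure.pi fun _ : Fin (m+2) => nu)
      (⋃ p ∈ Finset.univ.offDiag (α := Fin (m+2)), Eset m p.1 p.2) =
      ENNReal.ofReal (4/9 - 16/9 * (1/4:ℝ)^(m+2)) := by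
  rw [measure_biUnion_finset ?hd (fun p hp => measurableSet_Eset m p.1 p.2)]
  case hd =>
    intro p hp q hq hpq
    have hp' := (Finset.mem_offDiag.mp hp).2.2
    have hq' := (Finset.mem_offDiag.mp hq).2.2
    exact Eset_disjoint hp' hq' hpq
  have hcard : (Finset.univ.offDiag (α := Fin (m+2))).card = (m+2)*(m+1) := by
    rw [Finset.offDiag_card, Finset.card_univ, Fintype.card_fin]
    have : (m+2)*(m+2) = (m+2)*(m+1) + (m+2) := by ring
    omega
  rw [Finset.sum_congr rfl (fun p hp =>
    measure_Eset m p.1 p.2 (Finset.mem_offDiag.mp hp).2.2)]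
  rw [Finset.sum_const, hcard, nsmul_eq_mul]
  rw [← ENNReal.ofReal_natCast, ← ENNReal.ofReal_mul (by positivity)]
  congr 1
  have h1 : ((m:ℝ)+1) ≠ 0 := by positivity
  have h2 : ((m:ℝ)+2) ≠ 0 := by positivity
  push_cast
  field_simp
  ring

/-- For `n ≥ 1` i.i.d. uniform points on `(0,1)` with `r = 2`, `c = 1/2`,
`P(γ = 2) = 4/9 - (16/9)·4⁻ⁿ` and `P(γ = 1) = 5/9 + (16/9)·4⁻ⁿ`. -/
theorem picd_domNum_exact_r2_chalf (n : ℕ) (hn : 1 ≤ n) :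
    unifPi n {X | domNum n X (N01 2 (1/2)) = 2} =
        ENNReal.ofReal (4/9 - (16/9) * (1/4 : ℝ) ^ n) ∧
    unifPi n {X | domNum n X (N01 2 (1/2)) = 1} =
        ENNReal.ofReal (5/9 + (16/9) * (1/4 : ℝ) ^ n) := by
  have hprob : ∀ n : ℕ, IsProbabilityMeasure (unifPi n) := by
    intro n
    rw [show unifPi n = Measure.pi fun _ : Fin n => nu from rfl]
    infer_instance
  rcases Nat.lt_or_ge n 2 with hcase | hcase
  · -- n = 1
    have hn1 : n = 1 := by omega
    subst hn1
    have hdom : ∀ X : Fin 1 → ℝ, domNum 1 X (N01 2 (1/2)) = 1 := by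
      intro X
      rw [domNum_eq_one_iff X _ le_rfl]
      exact ⟨0, fun j => Or.inl (congrArg X (Subsingleton.elim j 0))⟩
    constructor
    · have he : {X : Fin 1 → ℝ | domNum 1 X (N01 2 (1/2)) = 2} = ∅ := by
        refine Set.eq_empty_iff_forall_notMem.mpr fun X hX => ?_
        have h1 := hdom X
        have h2 : domNum 1 X (N01 2 (1/2)) = 2 := hX
        omega
      rw [he, measure_empty, show (4/9 - (16/9) * (1/4:ℝ)^1) = 0 by norm_num,
        ENNReal.ofReal_zero]
    · have he : {X : Fin 1 → ℝ | domNum 1 X (N01 2 (1/2)) = 1} = Set.univ :=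
        Set.eq_univ_iff_forall.mpr fun X => hdom X
      have := hprob 1
      rw [he, measure_univ, show (5/9 + (16/9) * (1/4:ℝ)^1) = 1 by norm_num,
        ENNReal.ofReal_one]
  · -- n = m + 2
    obtain ⟨m, rfl⟩ : ∃ m, n = m + 2 := ⟨n - 2, by omega⟩
    have hμ : unifPi (m+2) = Measure.pi fun _ : Fin (m+2) => nu := rfl
    set W : Set (Fin (m+2) → ℝ) :=
      ⋃ p ∈ Finset.univ.offDiag (α := Fin (m+2)), Eset m p.1 p.2 with hW
    have hWmeas : MeasurableSet W :=
      Finset.measurableSet_biUnion _ fun p _ => measurableSet_Eset m p.1 p.2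
    set Z : Set (Fin (m+2) → ℝ) :=
      {X | ¬ ∀ i, X i ∈ Set.Ioo (0:ℝ) 1} ∪
      {X | ∃ p : Fin (m+2) × Fin (m+2), p.1 ≠ p.2 ∧ X p.1 = X p.2} with hZdef
    have hZ : unifPi (m+2) Z = 0 := by
      rw [hμ]
      exact measure_union_null (null_bad_coords _) (null_ties m)
    have hWsub : W ⊆ {X | domNum (m+2) X (N01 2 (1/2)) = 2} := by
      intro X hX
      simp only [hW, Set.mem_iUnion] at hX
      obtain ⟨p, -, hmem⟩ := hX
      exact Eset_subset_dom2 X hmem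
    have hsub1 : {X | domNum (m+2) X (N01 2 (1/2)) = 2} \ W ⊆ Z := by
      intro X ⟨hX2, hXW⟩
      by_contra hXZ
      simp only [hZdef, Set.mem_union, Set.mem_setOf_eq, not_or, not_not] at hXZ
      obtain ⟨hgood, hties⟩ := hXZ
      obtain ⟨p, hp, hmem⟩ := dom2_subset_union X hgood hties hX2
      exact hXW (Set.mem_biUnion (Finset.mem_offDiag.mpr
        ⟨Finset.mem_univ _, Finset.mem_univ _, hp⟩) hmem)
    have hmW := measure_W m
    have hΓ2 : unifPi (m+2) {X | domNum (m+2) X (N01 2 (1/2)) = 2} = unifPi (m+2) W := by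
      refine measure_congr (MeasureTheory.ae_eq_set.mpr ⟨measure_mono_null hsub1 hZ, ?_⟩)
      rw [Set.diff_eq_empty.mpr hWsub, measure_empty]
    have hc2 : unifPi (m+2) {X | domNum (m+2) X (N01 2 (1/2)) = 2} =
        ENNReal.ofReal (4/9 - (16/9) * (1/4 : ℝ) ^ (m+2)) := by
      rw [hΓ2, hμ, hmW]
    refine ⟨hc2, ?_⟩
    have hsub4 : Wᶜ \ {X | domNum (m+2) X (N01 2 (1/2)) = 1} ⊆ Z := by
      intro X ⟨hXW, hX1⟩
      by_contra hXZ
      simp only [hZdef, Set.mem_union, Set.mem_setOf_eq, not_or, not_not] at hXZ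
      obtain ⟨hgood, hties⟩ := hXZ
      simp only [Set.mem_setOf_eq] at hX1
      by_cases hD : ∃ i, ∀ j, X j = X i ∨ X j ∈ N01 2 (1/2) (X i)
      · exact hX1 ((domNum_eq_one_iff X _ (by omega)).mpr hD)
      · have h2 := (domNum_eq_two_iff (by omega) X hgood).mpr hD
        obtain ⟨p, hp, hmem⟩ := dom2_subset_union X hgood hties h2
        exact hXW (Set.mem_biUnion (Finset.mem_offDiag.mpr
          ⟨Finset.mem_univ _, Finset.mem_univ _, hp⟩) hmem)
    have hsub3 : {X | domNum (m+2) X (N01 2 (1/2)) = 1} \ Wᶜ ⊆ (∅ : Set _) := by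
      intro X ⟨hX1, hXW⟩
      rw [Set.notMem_compl_iff] at hXW
      have := hWsub hXW
      simp only [Set.mem_setOf_eq] at hX1 this
      omega
    have hΓ1 : unifPi (m+2) {X | domNum (m+2) X (N01 2 (1/2)) = 1} = unifPi (m+2) Wᶜ := by
      refine measure_congr (MeasureTheory.ae_eq_set.mpr
        ⟨measure_mono_null hsub3 measure_empty, measure_mono_null ?_ hZ⟩)
      intro X hX
      exact hsub4 hX
    have := hprob (m+2)
    rw [hΓ1, prob_compl_eq_one_sub hWmeas, hμ, hmW]
    have hx0 : (0:ℝ) ≤ 4/9 - 16/9 * (1/4:ℝ)^(m+2) := by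
      have hP : ((1:ℝ)/4)^(m+2) ≤ (1/4)^2 :=
        pow_le_pow_of_le_one (by norm_num) (by norm_num) (by omega)
      nlinarith
    have hiden : (5/9 + (16/9) * (1/4:ℝ)^(m+2)) = 1 - (4/9 - 16/9 * (1/4:ℝ)^(m+2)) := by
      ring
    rw [hiden, ENNReal.ofReal_sub 1 hx0, ENNReal.ofReal_one]
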